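/- For every bounded set B ⊆ N there exists δ₁ > 0 such that for all u ∈ B and all v ∈ V with P⁺v ≠ 0, sup{E₂(u,w) : w ∈ F_u(v)} ≥ δ₁. -/

import Mathlib

open scoped InnerProductSpace
open Filter Topology

theorem stmt_17
    {W : Type*} [NormedAddCommGroup W] [InnerProductSpace ℝ W] [CompleteSpace W]
    {V : Type*} [NormedAddCommGroup V] [InnerProductSpace ℝ V] [CompleteSpace V]
    (ι : V →L[ℝ] W) (hι : Function.Injective ι)
    (c : ℝ) (hc : 0 < c) (hιc : ∀ v : V, ‖ι v‖ ≤ c * ‖v‖)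
    (Pp Pm : V →L[ℝ] V)
    (hP_sum : ∀ v : V, Pp v + Pm v = v)
    (hPp_idem : ∀ v : V, Pp (Pp v) = Pp v)
    (hPm_idem : ∀ v : V, Pm (Pm v) = Pm v)
    (hP_orth : ∀ v w : V, ⟪Pp v, Pm w⟫_ℝ = 0)
    (a : V →L[ℝ] V →L[ℝ] ℝ)
    (ha : ∀ v w : V, a v w = ⟪Pp v, Pp w⟫_ℝ - ⟪Pm v, Pm w⟫_ℝ)
    {N : Type*} [NormedAddCommGroup N] [InnerProductSpace ℝ N] [CompleteSpace N]
    (p : ℝ) (hp : 1 < p)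
    (b : N → V → ℝ) (f : N → ℝ → ℝ)
    (hb_C2 : ContDiff ℝ 2 (fun q : N × V => b q.1 q.2))
    (hb_zero : ∀ u : N, b u 0 = 0)
    (hb_nonneg : ∀ (u : N) (v : V), 0 ≤ b u v)
    (hf_cont : ContinuousOn (fun q : N × ℝ => f q.1 q.2) (Set.univ ×ˢ Set.Ici (0:ℝ)))
    (hf_zero : ∀ u : N, f u 0 = 0)
    (hf_mono : ∀ u : N, StrictMonoOn (f u) (Set.Ici (0:ℝ)))
    (hf_nonneg : ∀ (u : N) (t : ℝ), 0 ≤ t → 0 ≤ f u t)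
    (hgrad : ∀ (u : N) (v h : V), fderiv ℝ (b u) v h = f u ‖ι v‖ * ⟪ι v, ι h⟫_ℝ)
    (C₂ : ℝ → ℝ) (hC₂_cont : ContinuousOn C₂ (Set.Ici (0:ℝ)))
    (hC₂_pos : ∀ t : ℝ, 0 ≤ t → 0 < C₂ t)
    (hbII : ∀ (u : N) (v h k : V),
      |fderiv ℝ (fun w => fderiv ℝ (b u) w h) v k| ≤ C₂ ‖u‖ * ‖ι v‖ ^ (p - 1) * ‖ι h‖ * ‖ι k‖)
    :
    ∀ B : Set N, Bornology.IsBounded B →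
      ∃ δ₁ : ℝ, 0 < δ₁ ∧ ∀ (u : N), u ∈ B → ∀ v : V, Pp v ≠ 0 →
        ∃ (t : ℝ) (w : V), 0 ≤ t ∧ Pm w = w ∧
          δ₁ ≤ (1/2 : ℝ) * a (t • v + w) (t • v + w) - b u (t • v + w) := by
  intro B hB
  obtain ⟨R, hR⟩ := hB.exists_norm_le
  set M := max R 0 with hM
  have hM0 : (0:ℝ) ≤ M := le_max_right _ _
  obtain ⟨z, hz, hzmax⟩ := (isCompact_Icc (a := (0:ℝ)) (b := M)).exists_isMaxOn
    ⟨0, by simp [hM0]⟩ (hC₂_cont.mono (fun x hx => hx.1))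
  set K0 := C₂ z with hK0
  have hK0pos : 0 < K0 := hC₂_pos z hz.1
  have hp1 : (0:ℝ) < p - 1 := by linarith
  set s : ℝ := min 1 (((4*K0*c^2)⁻¹) ^ ((p-1)⁻¹)) with hs
  have hs_pos : 0 < s := lt_min one_pos (Real.rpow_pos_of_pos (by positivity) _)
  have hs_le : s ^ (p-1) ≤ (4*K0*c^2)⁻¹ := by
    calc s ^ (p-1) ≤ ((((4*K0*c^2)⁻¹) ^ ((p-1)⁻¹))) ^ (p-1) :=
          Real.rpow_le_rpow hs_pos.le (min_le_right _ _) hp1.le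
      _ = (4*K0*c^2)⁻¹ := Real.rpow_inv_rpow (by positivity) (ne_of_gt hp1)
  set r : ℝ := s / c with hr
  have hrpos : 0 < r := div_pos hs_pos hc
  have hcr : c * r = s := by
    rw [hr, mul_div_assoc']
    exact mul_div_cancel_left₀ s hc.ne'
  refine ⟨r^2/4, div_pos (pow_pos hrpos 2) (by norm_num), ?_⟩
  intro u hu v hPpv
  -- constants
  have huM : ‖u‖ ∈ Set.Icc (0:ℝ) M := ⟨norm_nonneg _, le_trans (hR u hu) (le_max_left _ _)⟩
  have hCu : C₂ ‖u‖ ≤ K0 := hzmax huM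
  set L : ℝ := K0 * s ^ (p-1) * c * c with hL
  have hsp_nn : 0 ≤ s ^ (p-1) := Real.rpow_nonneg hs_pos.le _
  have hLnn : 0 ≤ L :=
    mul_nonneg (mul_nonneg (mul_nonneg hK0pos.le hsp_nn) hc.le) hc.le
  have hL4 : L ≤ 1/4 := by
    have h1 : L ≤ K0 * (4*K0*c^2)⁻¹ * c * c :=
      mul_le_mul_of_nonneg_right (mul_le_mul_of_nonneg_right
        (mul_le_mul_of_nonneg_left hs_le hK0pos.le) hc.le) hc.le
    have heq : K0 * (4*K0*c^2)⁻¹ * c * c = 1/4 := by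
      field_simp
    linarith
  -- differentiability facts
  have hbu : ContDiff ℝ 2 (b u) := hb_C2.comp (contDiff_const.prodMk contDiff_id)
  have hDb : ContDiff ℝ 1 (fderiv ℝ (b u)) := hbu.fderiv_right (by norm_num)
  have hbd : Differentiable ℝ (b u) := hbu.differentiable (by norm_num)
  have hD0 : ∀ h : V, fderiv ℝ (b u) 0 h = 0 := by
    intro h
    rw [hgrad]
    simp [hf_zero]
  -- step 1 : bound on the derivative on the ball of radius r
  have step1 : ∀ v' : V, ‖v'‖ ≤ r → ∀ h : V, |fderiv ℝ (b u) v' h| ≤ L * ‖h‖ * r := by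
    intro v' hv' h
    have hdiff : ∀ x ∈ Metric.closedBall (0:V) r,
        DifferentiableAt ℝ (fun w => fderiv ℝ (b u) w h) x := by
      intro x _
      exact (((ContinuousLinearMap.apply ℝ ℝ h).contDiff.comp hDb).differentiable
        one_ne_zero) x
    have hbound : ∀ x ∈ Metric.closedBall (0:V) r,
        ‖fderiv ℝ (fun w => fderiv ℝ (b u) w h) x‖ ≤ L * ‖h‖ := by
      intro x hx
      rw [Metric.mem_closedBall, dist_zero_right] at hx
      refine ContinuousLinearMap.opNorm_le_bound _ (mul_nonneg hLnn (norm_nonneg h)) ?_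
      intro k
      have h1 := hbII u x h k
      have h2 : ‖ι x‖ ^ (p-1) ≤ s ^ (p-1) := by
        refine Real.rpow_le_rpow (norm_nonneg _) ?_ hp1.le
        calc ‖ι x‖ ≤ c * ‖x‖ := hιc x
          _ ≤ c * r := mul_le_mul_of_nonneg_left hx hc.le
          _ = s := hcr
      have h3 : ‖ι h‖ ≤ c * ‖h‖ := hιc h
      have h4 : ‖ι k‖ ≤ c * ‖k‖ := hιc k
      have hC0 : 0 ≤ C₂ ‖u‖ := (hC₂_pos _ (norm_nonneg _)).le
      calc ‖fderiv ℝ (fun w => fderiv ℝ (b u) w h) x k‖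
          = |fderiv ℝ (fun w => fderiv ℝ (b u) w h) x k| := Real.norm_eq_abs _
        _ ≤ C₂ ‖u‖ * ‖ι x‖ ^ (p-1) * ‖ι h‖ * ‖ι k‖ := h1
        _ ≤ K0 * s ^ (p-1) * (c * ‖h‖) * (c * ‖k‖) := by
            have hx1 : 0 ≤ ‖ι x‖ ^ (p-1) := Real.rpow_nonneg (norm_nonneg _) _
            have hn1 : 0 ≤ K0 * s ^ (p-1) := mul_nonneg hK0pos.le hsp_nn
            exact mul_le_mul (mul_le_mul (mul_le_mul hCu h2 hx1 hK0pos.le) h3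
              (norm_nonneg _) hn1) h4 (norm_nonneg _)
              (mul_nonneg hn1 (mul_nonneg hc.le (norm_nonneg _)))
        _ = L * ‖h‖ * ‖k‖ := by rw [hL]; ring
    have hmv := (convex_closedBall (0:V) r).norm_image_sub_le_of_norm_fderiv_le
      hdiff hbound (Metric.mem_closedBall_self hrpos.le)
      (by rw [Metric.mem_closedBall, dist_zero_right]; exact hv')
    rw [hD0 h, sub_zero, sub_zero, Real.norm_eq_abs] at hmv
    calc |fderiv ℝ (b u) v' h| ≤ L * ‖h‖ * ‖v'‖ := hmv
      _ ≤ L * ‖h‖ * r :=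
          mul_le_mul_of_nonneg_left hv' (mul_nonneg hLnn (norm_nonneg h))
  -- step 2 : bound on b on the sphere of radius r
  have step2 : ∀ x : V, ‖x‖ ≤ r → b u x ≤ L * r * r := by
    intro x hx
    have hdiff : ∀ y ∈ Metric.closedBall (0:V) r, DifferentiableAt ℝ (b u) y :=
      fun y _ => hbd y
    have hbound : ∀ y ∈ Metric.closedBall (0:V) r, ‖fderiv ℝ (b u) y‖ ≤ L * r := by
      intro y hy
      rw [Metric.mem_closedBall, dist_zero_right] at hy
      refine ContinuousLinearMap.opNorm_le_bound _ (mul_nonneg hLnn hrpos.le) ?_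
      intro h
      calc ‖fderiv ℝ (b u) y h‖ = |fderiv ℝ (b u) y h| := Real.norm_eq_abs _
        _ ≤ L * ‖h‖ * r := step1 y hy h
        _ = L * r * ‖h‖ := by ring
    have hmv := (convex_closedBall (0:V) r).norm_image_sub_le_of_norm_fderiv_le
      hdiff hbound (Metric.mem_closedBall_self hrpos.le)
      (by rw [Metric.mem_closedBall, dist_zero_right]; exact hx)
    rw [hb_zero u, sub_zero, sub_zero, Real.norm_eq_abs] at hmv
    calc b u x ≤ |b u x| := le_abs_self _
      _ ≤ L * r * ‖x‖ := hmv
      _ ≤ L * r * r := mul_le_mul_of_nonneg_left hx (mul_nonneg hLnn hrpos.le)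
  -- construct t, w
  have hnv : 0 < ‖Pp v‖ := norm_pos_iff.mpr hPpv
  set t : ℝ := r / ‖Pp v‖ with ht
  have htpos : 0 < t := div_pos hrpos hnv
  refine ⟨t, -(t • Pm v), htpos.le, ?_, ?_⟩
  · rw [map_neg, map_smul, hPm_idem]
  set x : V := t • Pp v with hxdef
  have hPpv' : Pp v = v - Pm v := eq_sub_of_add_eq (hP_sum v)
  have hxeq : t • v + -(t • Pm v) = x := by
    rw [hxdef, hPpv', smul_sub]
    abel
  have hPpx : Pp x = x := by rw [hxdef, map_smul, hPp_idem]
  have hPmx : Pm x = 0 := by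
    have h := hP_sum x
    rw [hPpx] at h
    exact add_eq_left.mp h
  have hxnorm : ‖x‖ = r := by
    rw [hxdef, norm_smul, Real.norm_eq_abs, abs_of_pos htpos, ht]
    exact div_mul_cancel₀ r hnv.ne'
  have haxx : a x x = r^2 := by
    rw [ha, hPpx, hPmx, inner_zero_left, sub_zero, real_inner_self_eq_norm_sq, hxnorm]
  have hbx : b u x ≤ r^2/4 := by
    have := step2 x (le_of_eq hxnorm)
    nlinarith
  rw [hxeq, haxx]
  linarith
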